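/- Let X_1, …, X_K be square-integrable real random variables on a common probability space, with means μ_i := E[X_i], and set V_{ij} := Var(X_i − X_j). Define Λ_{ij} ∈ [0, ∞] by Λ_{ij} := V_{ij}/(μ_j − μ_i)² + 3/(μ_j − μ_i) if μ_j > μ_i and Λ_{ij} := +∞ otherwise. Then for all i, j, k ∈ {1, …, K}: Λ_{ij} ≤ max{Λ_{ik}, Λ_{kj}}. -/

import Mathlib

open MeasureTheory ProbabilityTheory ENNReal

lemma var_eq_sq_aux {Ω : Type*} [MeasurableSpace Ω] (P : Measure Ω) [IsProbabilityMeasure P]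
    (f : Ω → ℝ) :
    variance f P = ((eLpNorm (f - fun _ => ∫ x, f x ∂P) 2 P).toReal)^2 := by
  have h : evariance f P = (eLpNorm (f - fun _ => ∫ x, f x ∂P) 2 P) ^ 2 := by
    rw [eLpNorm_eq_lintegral_rpow_enorm_toReal two_ne_zero ENNReal.ofNat_ne_top]
    rw [← ENNReal.rpow_natCast _ 2, ← ENNReal.rpow_mul]
    simp only [ENNReal.toReal_ofNat, one_div, Nat.cast_ofNat]
    rw [inv_mul_cancel₀ (by norm_num : (2:ℝ) ≠ 0), ENNReal.rpow_one, evariance]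
    congr 1
    ext ω
    rw [← ENNReal.rpow_natCast]
    norm_num
  rw [variance, h, ENNReal.toReal_pow]

lemma sqrt_var_add_aux {Ω : Type*} [MeasurableSpace Ω] (P : Measure Ω) [IsProbabilityMeasure P]
    (f g : Ω → ℝ) (hf : MemLp f 2 P) (hg : MemLp g 2 P) :
    Real.sqrt (variance (f + g) P) ≤ Real.sqrt (variance f P) + Real.sqrt (variance g P) := by
  set cf : Ω → ℝ := f - fun _ => ∫ x, f x ∂P with hcf
  set cg : Ω → ℝ := g - fun _ => ∫ x, g x ∂P with hcg
  have hint : ∫ x, (f + g) x ∂P = (∫ x, f x ∂P) + ∫ x, g x ∂P := by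
    simpa using integral_add (hf.integrable one_le_two) (hg.integrable one_le_two)
  have hceq : ((f + g) - fun _ => ∫ x, (f + g) x ∂P) = cf + cg := by
    rw [hint]; ext ω; simp [hcf, hcg]; ring
  have hcf2 : MemLp cf 2 P := hf.sub (memLp_const _)
  have hcg2 : MemLp cg 2 P := hg.sub (memLp_const _)
  have htri : eLpNorm ((f + g) - fun _ => ∫ x, (f + g) x ∂P) 2 P
      ≤ eLpNorm cf 2 P + eLpNorm cg 2 P := by
    rw [hceq]
    exact eLpNorm_add_le hcf2.1 hcg2.1 one_le_two
  have hfin1 : eLpNorm cf 2 P ≠ ⊤ := hcf2.eLpNorm_lt_top.ne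
  have hfin2 : eLpNorm cg 2 P ≠ ⊤ := hcg2.eLpNorm_lt_top.ne
  have htr : (eLpNorm ((f + g) - fun _ => ∫ x, (f + g) x ∂P) 2 P).toReal
      ≤ (eLpNorm cf 2 P).toReal + (eLpNorm cg 2 P).toReal := by
    rw [← ENNReal.toReal_add hfin1 hfin2]
    exact ENNReal.toReal_mono (by simp [ENNReal.add_ne_top, hfin1, hfin2]) htri
  rw [var_eq_sq_aux P (f + g), var_eq_sq_aux P f, var_eq_sq_aux P g,
    Real.sqrt_sq ENNReal.toReal_nonneg, Real.sqrt_sq ENNReal.toReal_nonneg,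
    Real.sqrt_sq ENNReal.toReal_nonneg]
  exact htr

lemma key_ineq_aux (a b s1 s2 s M : ℝ) (ha : 0 < a) (hb : 0 < b)
    (hs1 : 0 ≤ s1) (hs2 : 0 ≤ s2) (hs0 : 0 ≤ s) (hs : s ≤ s1 + s2)
    (h1 : s1^2/a^2 + 3/a ≤ M) (h2 : s2^2/b^2 + 3/b ≤ M) :
    s^2/(a+b)^2 + 3/(a+b) ≤ M := by
  have ha2 : (0:ℝ) < a^2 := by positivity
  have hb2 : (0:ℝ) < b^2 := by positivity
  have hca : 3/a*a = 3 := div_mul_cancel₀ _ ha.ne'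
  have hcb : 3/b*b = 3 := div_mul_cancel₀ _ hb.ne'
  have h1' : s1^2 ≤ a^2*M - 3*a := by
    have h : s1^2/a^2 ≤ M - 3/a := by linarith
    rw [div_le_iff₀ ha2] at h
    nlinarith [h]
  have h2' : s2^2 ≤ b^2*M - 3*b := by
    have h : s2^2/b^2 ≤ M - 3/b := by linarith
    rw [div_le_iff₀ hb2] at h
    nlinarith [h]
  have haM : 3 ≤ a*M := by nlinarith [sq_nonneg s1]
  have hbM : 3 ≤ b*M := by nlinarith [sq_nonneg s2]
  have hM : 0 < M := by nlinarith
  have h12 : s1*s2 ≤ a*b*M := by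
    have hsqc : (s1*s2)^2 ≤ (a*b*M)^2 := by
      nlinarith [mul_le_mul h1' h2' (sq_nonneg s2) (by nlinarith : (0:ℝ) ≤ a^2*M - 3*a)]
    exact le_of_pow_le_pow_left₀ two_ne_zero (by positivity) hsqc
  have hfin : s^2 ≤ (a+b)^2*M - 3*(a+b) := by
    nlinarith [mul_le_mul hs hs hs0 (by linarith : (0:ℝ) ≤ s1 + s2)]
  rw [div_add_div _ _ (by positivity) (by positivity : (a:ℝ)+b ≠ 0), div_le_iff₀ (by positivity)]
  ring_nf
  nlinarith [hfin]

/-- Ultra-metric property of the quantities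
`Λ_{ij} = V_{ij}/(μ_j - μ_i)² + 3/(μ_j - μ_i)`
(with value `+∞` when `μ_j ≤ μ_i`), where `V_{ij} = Var(X_i - X_j)`. -/
theorem ultrametric_Lambda {Ω : Type*} [MeasurableSpace Ω]
    (P : Measure Ω) [IsProbabilityMeasure P] (K : ℕ)
    (X : Fin K → Ω → ℝ) (hX : ∀ i, MemLp (X i) 2 P)
    (μ : Fin K → ℝ) (hμ : ∀ i, μ i = ∫ ω, X i ω ∂P)
    (V : Fin K → Fin K → ℝ)
    (hV : ∀ i j, V i j = variance (fun ω => X i ω - X j ω) P)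
    (Λ : Fin K → Fin K → ℝ≥0∞)
    (hΛ : ∀ i j, Λ i j =
      if μ i < μ j then
        ENNReal.ofReal (V i j / (μ j - μ i) ^ 2 + 3 / (μ j - μ i)) else ⊤)
    (i j k : Fin K) :
    Λ i j ≤ max (Λ i k) (Λ k j) := by
  by_cases hik : μ i < μ k
  · by_cases hkj : μ k < μ j
    · -- main case
      have hij : μ i < μ j := hik.trans hkj
      set a : ℝ := μ k - μ i with hadef
      set b : ℝ := μ j - μ k with hbdef
      have ha : 0 < a := by simp [hadef]; linarith
      have hb : 0 < b := by simp [hbdef]; linarith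
      have hab : μ j - μ i = a + b := by ring
      -- variances nonneg
      have hVik : 0 ≤ V i k := (hV i k) ▸ variance_nonneg _ P
      have hVkj : 0 ≤ V k j := (hV k j) ▸ variance_nonneg _ P
      have hVij : 0 ≤ V i j := (hV i j) ▸ variance_nonneg _ P
      -- standard deviation triangle inequality
      have htri : Real.sqrt (V i j) ≤ Real.sqrt (V i k) + Real.sqrt (V k j) := by
        rw [hV i j, hV i k, hV k j]
        have heq : (fun ω => X i ω - X j ω)
            = (fun ω => X i ω - X k ω) + (fun ω => X k ω - X j ω) := by
          ext ω; simp only [Pi.add_apply]; ring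
        rw [heq]
        exact sqrt_var_add_aux P _ _ ((hX i).sub (hX k)) ((hX k).sub (hX j))
      set A : ℝ := V i k / (μ k - μ i) ^ 2 + 3 / (μ k - μ i) with hA
      set B : ℝ := V k j / (μ j - μ k) ^ 2 + 3 / (μ j - μ k) with hB
      have hkey : V i j / (μ j - μ i) ^ 2 + 3 / (μ j - μ i) ≤ max A B := by
        rw [hab]
        have h := key_ineq_aux a b (Real.sqrt (V i k)) (Real.sqrt (V k j))
          (Real.sqrt (V i j)) (max A B) ha hb (Real.sqrt_nonneg _) (Real.sqrt_nonneg _)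
          (Real.sqrt_nonneg _) htri ?_ ?_
        · rwa [Real.sq_sqrt hVij] at h
        · rw [Real.sq_sqrt hVik]; exact le_max_left A B
        · rw [Real.sq_sqrt hVkj]; exact le_max_right A B
      rw [hΛ i j, hΛ i k, hΛ k j, if_pos hij, if_pos hik, if_pos hkj]
      rcases le_total A B with h | h
      · exact le_max_of_le_right (ENNReal.ofReal_le_ofReal
          (hkey.trans_eq (max_eq_right h)))
      · exact le_max_of_le_left (ENNReal.ofReal_le_ofReal
          (hkey.trans_eq (max_eq_left h)))
    · rw [hΛ k j, if_neg hkj]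
      exact le_max_of_le_right le_top
  · rw [hΛ i k, if_neg hik]
    exact le_max_of_le_left le_top
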